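/- For every natural number N, the (N+1)×(N+1) symmetric matrix with entries 1/(i! · j! · (i+j+1)) for 0 ≤ i, j ≤ N is positive definite. -/

import Mathlib

open intervalIntegral Polynomial Matrix in
/-- The (N+1)×(N+1) matrix with entries `1/(i! j! (i+j+1))` is positive definite. -/
theorem hilbert_type_posDef (N : ℕ) :
    (Matrix.of fun i j : Fin (N + 1) =>
        (1 : ℝ) / ((Nat.factorial i.val : ℝ) * (Nat.factorial j.val : ℝ) *
          (i.val + j.val + 1))).PosDef := by
  rw [Matrix.posDef_iff_dotProduct_mulVec]
  constructor
  · ext i j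
    simp [Matrix.transpose, mul_comm, mul_left_comm, add_comm]
  · intro v hv
    set a : Fin (N + 1) → ℝ := fun i => v i / (Nat.factorial i.val : ℝ) with ha
    set g : ℝ → ℝ := fun x => ∑ i : Fin (N + 1), a i * x ^ i.val with hg
    have hcalc : ∀ x : ℝ, (g x) ^ 2 =
        ∑ i : Fin (N + 1), ∑ j : Fin (N + 1), a i * a j * x ^ (i.val + j.val) := by
      intro x
      rw [hg, sq, Finset.sum_mul_sum]
      refine Finset.sum_congr rfl fun i _ => Finset.sum_congr rfl fun j _ => ?_
      rw [pow_add]; ring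
    have key : v ⬝ᵥ (Matrix.of fun i j : Fin (N + 1) =>
        (1 : ℝ) / ((Nat.factorial i.val : ℝ) * (Nat.factorial j.val : ℝ) *
          (i.val + j.val + 1))) *ᵥ v = ∫ x in (0:ℝ)..1, (g x) ^ 2 := by
      simp only [hcalc]
      rw [intervalIntegral.integral_finset_sum (fun i _ =>
        ((continuous_finset_sum _ fun j _ =>
          (continuous_const.mul (continuous_pow _)) : Continuous fun x : ℝ =>
            ∑ j : Fin (N + 1), a i * a j * x ^ (i.val + j.val)).intervalIntegrable 0 1))]
      simp only [dotProduct, Matrix.mulVec, Matrix.of_apply, Finset.mul_sum]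
      refine Finset.sum_congr rfl fun i _ => ?_
      rw [intervalIntegral.integral_finset_sum (fun j _ =>
        ((show Continuous fun x : ℝ => a i * a j * x ^ (i.val + j.val) from
          continuous_const.mul (continuous_pow _)).intervalIntegrable 0 1))]
      refine Finset.sum_congr rfl fun j _ => ?_
      rw [intervalIntegral.integral_const_mul, integral_pow]
      have hfi : (Nat.factorial i.val : ℝ) ≠ 0 := Nat.cast_ne_zero.mpr i.val.factorial_ne_zero
      have hfj : (Nat.factorial j.val : ℝ) ≠ 0 := Nat.cast_ne_zero.mpr j.val.factorial_ne_zero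
      have hd : ((i.val : ℝ) + j.val + 1) ≠ 0 := by positivity
      simp only [ha, Matrix.of_apply]
      push_cast
      field_simp
      try ring
    rw [show star v = v from rfl, key]
    -- the polynomial is nonzero
    set P : Polynomial ℝ := ∑ i : Fin (N + 1), Polynomial.C (a i) * Polynomial.X ^ i.val with hP
    have hPeval : ∀ x : ℝ, P.eval x = g x := by
      intro x; simp [hP, hg, Polynomial.eval_finset_sum]
    have hPne : P ≠ 0 := by
      intro h
      apply hv
      funext i
      have hc : P.coeff i.val = a i := by
        rw [hP]
        simp only [Polynomial.finset_sum_coeff, Polynomial.coeff_C_mul,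
          Polynomial.coeff_X_pow]
        rw [Finset.sum_eq_single i]
        · simp
        · intro j _ hj
          have : ¬ (i.val = j.val) := fun hh => hj (Fin.ext hh.symm)
          simp [this]
        · simp
      rw [h] at hc
      simp only [Polynomial.coeff_zero] at hc
      have hfi : (Nat.factorial i.val : ℝ) ≠ 0 := Nat.cast_ne_zero.mpr i.val.factorial_ne_zero
      have := hc.symm
      rw [ha] at this
      field_simp at this
      simpa using this
    obtain ⟨c, hc1, hc2⟩ : ∃ c ∈ Set.Icc (0:ℝ) 1, ¬ P.IsRoot c := by
      by_contra hcon
      push_neg at hcon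
      exact (Set.Icc_infinite (by norm_num : (0:ℝ) < 1)).mono
        (fun x hx => hcon x hx) (Polynomial.finite_setOf_isRoot hPne)
    have hgc : Continuous g := continuous_finset_sum _ fun i _ =>
      continuous_const.mul (continuous_pow _)
    refine intervalIntegral.integral_pos (by norm_num) ?_ (fun x _ => sq_nonneg _) ?_
    · exact (hgc.pow 2).continuousOn
    · exact ⟨c, hc1, by
        have : g c ≠ 0 := by rw [← hPeval]; exact hc2
        positivity⟩
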